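/- Let k, p : {(a,b) : a,b ∈ {1,…,5}, a ≠ b} → ℝ be symmetric (k_ab = k_ba, p_ab = p_ba) with k_ab ≠ 0 for all a ≠ b, and let n_ab ∈ ℝ³ be given for all a ≠ b such that for each fixed a the four vectors {n_ab : b ≠ a} span ℝ³. Suppose for each a the closure conditions Σ_{b ≠ a} p_ab n_ab = 0 and Σ_{b ≠ a} k_ab n_ab = 0 hold. Then there exists a single constant γ ∈ ℝ such that p_ab = γ k_ab for all a ≠ b. -/

import Mathlib

/-- Five tetrahedra closure: symmetric labels k, p on pairs of distinct indices with
k ≠ 0, normals n_ab spanning ℝ³ at each a, and both closure conditions at each a,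
force p_ab = γ k_ab for a single constant γ. -/
theorem stmt12 (k p : Fin 5 → Fin 5 → ℝ) (n : Fin 5 → Fin 5 → Fin 3 → ℝ)
    (hksymm : ∀ a b, a ≠ b → k a b = k b a)
    (hpsymm : ∀ a b, a ≠ b → p a b = p b a)
    (hk0 : ∀ a b, a ≠ b → k a b ≠ 0)
    (hspan : ∀ a : Fin 5, Submodule.span ℝ {x | ∃ b, b ≠ a ∧ x = n a b} = ⊤)
    (hpclose : ∀ a : Fin 5, ∑ b ∈ Finset.univ.filter (· ≠ a), p a b • n a b = 0)
    (hkclose : ∀ a : Fin 5, ∑ b ∈ Finset.univ.filter (· ≠ a), k a b • n a b = 0) :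
    ∃ γ : ℝ, ∀ a b, a ≠ b → p a b = γ * k a b := by
  have key : ∀ a : Fin 5, ∃ γ : ℝ, ∀ b, b ≠ a → p a b = γ * k a b := by
    intro a
    set v : {b : Fin 5 // b ≠ a} → (Fin 3 → ℝ) := fun b => n a b with hv
    set T : ({b : Fin 5 // b ≠ a} → ℝ) →ₗ[ℝ] (Fin 3 → ℝ) :=
      Fintype.linearCombination ℝ v with hT
    have hrange : LinearMap.range T = ⊤ := by
      rw [hT, Fintype.range_linearCombination, ← hspan a]
      congr 1
      ext x
      constructor
      · rintro ⟨b, rfl⟩; exact ⟨b, b.2, rfl⟩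
      · rintro ⟨b, hb, rfl⟩; exact ⟨⟨b, hb⟩, rfl⟩
    have hker : Module.finrank ℝ (LinearMap.ker T) = 1 := by
      have h1 := LinearMap.finrank_range_add_finrank_ker T
      rw [hrange, finrank_top] at h1
      have h2 : Module.finrank ℝ (Fin 3 → ℝ) = 3 := by simp
      have h3 : Module.finrank ℝ ({b : Fin 5 // b ≠ a} → ℝ) = 4 := by
        rw [Module.finrank_pi]
        simp [Fintype.card_subtype_compl]
      omega
    have hmem : ∀ (c : Fin 5 → ℝ),
        (∑ b ∈ Finset.univ.filter (· ≠ a), c b • n a b = 0) →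
        (fun b : {b : Fin 5 // b ≠ a} => c b) ∈ LinearMap.ker T := by
      intro c hc
      rw [LinearMap.mem_ker, hT, Fintype.linearCombination_apply]
      rw [← hc]
      exact (Finset.sum_subtype _ (fun x => by simp) (fun b => c b • n a b)).symm
    have hkm := hmem (k a) (hkclose a)
    have hpm := hmem (p a) (hpclose a)
    have hd0 : (fun b : {b : Fin 5 // b ≠ a} => k a b) ≠ 0 := by
      obtain ⟨b, hb⟩ := exists_ne a
      intro h
      exact hk0 a b (Ne.symm hb) (congrFun h ⟨b, hb⟩)
    have hle : Submodule.span ℝ {(fun b : {b : Fin 5 // b ≠ a} => k a b)} ≤ LinearMap.ker T :=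
      Submodule.span_le.mpr (by simpa using hkm)
    have heq : Submodule.span ℝ {(fun b : {b : Fin 5 // b ≠ a} => k a b)} = LinearMap.ker T := by
      apply Submodule.eq_of_le_of_finrank_le hle
      rw [hker, finrank_span_singleton hd0]
    rw [← heq] at hpm
    obtain ⟨γ, hγ⟩ := Submodule.mem_span_singleton.mp hpm
    exact ⟨γ, fun b hb => by
      have := congrFun hγ ⟨b, hb⟩
      simpa [eq_comm] using this.symm⟩
  choose γ hγ using key
  refine ⟨γ 0, fun a b hab => ?_⟩
  have hab' : b ≠ a := hab.symm
  have same : ∀ x y : Fin 5, x ≠ y → γ x = γ y := by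
    intro x y hxy
    have h1 := hγ x y hxy.symm
    have h2 := hγ y x hxy
    rw [hpsymm x y hxy, h2, ← hksymm x y hxy] at h1
    exact (mul_right_cancel₀ (hk0 x y hxy) h1).symm
  rcases eq_or_ne a 0 with h | h
  · rw [← h]; exact hγ a b hab'
  · rw [← same a 0 h]; exact hγ a b hab'
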